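/- Let Γ be a G-symmetric graph with G-partition 𝓑 into v+1 = b+1 blocks of size v with complete quotient, G(B)^B 2-transitive, t ≥ 2 and k = 2 < v. Then no such graph exists; that is, the conditions t ≥ 2 and k = 2 are incompatible. -/

import Mathlib

open scoped Pointwise

def IsGSymmetric {V G : Type*} [Group G] [MulAction G V] (Γ : SimpleGraph V) : Prop :=
  (∀ (g : G) (x y : V), Γ.Adj x y → Γ.Adj (g • x) (g • y)) ∧
  (∀ x y : V, ∃ g : G, g • x = y) ∧
  (∀ x₁ y₁ x₂ y₂ : V, Γ.Adj x₁ y₁ → Γ.Adj x₂ y₂ → ∃ g : G, g • x₁ = x₂ ∧ g • y₁ = y₂)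

def IsGPartition {V : Type*} (G : Type*) [Group G] [MulAction G V] (𝓑 : Set (Set V)) : Prop :=
  Setoid.IsPartition 𝓑 ∧ ∀ (g : G), ∀ B ∈ 𝓑, g • B ∈ 𝓑

def BlockAdj {V : Type*} (Γ : SimpleGraph V) (B B' : Set V) : Prop :=
  B ≠ B' ∧ ∃ x ∈ B, ∃ y ∈ B', Γ.Adj x y

/-- The trace of block `C` in block `B` : vertices of `B` having a neighbour in `C`. -/
def trac {V : Type*} (Γ : SimpleGraph V) (B C : Set V) : Set V :=
  {x ∈ B | ∃ y ∈ C, Γ.Adj x y}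

lemma trac_smul {V G : Type*} [Group G] [MulAction G V] (Γ : SimpleGraph V)
    (hΓ : ∀ (g : G) (x y : V), Γ.Adj x y → Γ.Adj (g • x) (g • y))
    (g : G) (B C : Set V) :
    trac Γ (g • B) (g • C) = g • trac Γ B C := by
  ext z
  simp only [trac, Set.mem_setOf_eq, Set.mem_smul_set_iff_inv_smul_mem]
  constructor
  · rintro ⟨hzB, y, hyC, hadj⟩
    exact ⟨hzB, g⁻¹ • y, hyC, hΓ g⁻¹ _ _ hadj⟩
  · rintro ⟨hzB, y, hyC, hadj⟩
    refine ⟨hzB, g • y, by simpa using hyC, ?_⟩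
    have := hΓ g _ _ hadj
    simpa using this

/-- with complete quotient, `v = b` blocks of size `v`, `G(B)^B` 2-transitive,
`𝓓(B)` a symmetric 2-design without repeated blocks, `t ≥ 2` and `k = 2 < v` are
incompatible: no such graph exists. -/
theorem stmt17 {V G : Type*} [Fintype V] [Group G] [MulAction G V]
    (Γ : SimpleGraph V) (𝓑 : Set (Set V))
    (hsym : IsGSymmetric (G := G) Γ) (hpart : IsGPartition G 𝓑)
    (v t : ℕ) (hv2 : 2 < v) (ht2 : 2 ≤ t)
    (hcomplete : ∀ B ∈ 𝓑, ∀ B' ∈ 𝓑, B ≠ B' → BlockAdj Γ B B')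
    (hcard : 𝓑.ncard = v + 1)
    (hsize : ∀ B ∈ 𝓑, B.ncard = v)
    (h2trans : ∀ B ∈ 𝓑, ∀ x₁ ∈ B, ∀ y₁ ∈ B, ∀ x₂ ∈ B, ∀ y₂ ∈ B, x₁ ≠ y₁ → x₂ ≠ y₂ →
      ∃ g : G, g • B = B ∧ g • x₁ = x₂ ∧ g • y₁ = y₂)
    (hnorep : ∀ B ∈ 𝓑, ∀ B₁ ∈ 𝓑, ∀ B₂ ∈ 𝓑, B₁ ≠ B → B₂ ≠ B →
      {x ∈ B | ∃ y ∈ B₁, Γ.Adj x y} = {x ∈ B | ∃ y ∈ B₂, Γ.Adj x y} → B₁ = B₂)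
    (ht : ∀ B ∈ 𝓑, ∀ B' ∈ 𝓑, B ≠ B' → ∀ x ∈ B,
      (Γ.neighborSet x ∩ B').ncard = 0 ∨ (Γ.neighborSet x ∩ B').ncard = t)
    (hk : ∀ B ∈ 𝓑, ∀ B' ∈ 𝓑, B ≠ B' → {x ∈ B | ∃ y ∈ B', Γ.Adj x y}.ncard = 2) :
    False := by
  classical
  obtain ⟨hadj_smul, -, harc⟩ := hsym
  obtain ⟨hsetoid, hstab⟩ := hpart
  -- injectivity of the action on sets
  have hinj : ∀ (g : G) (A B : Set V), g • A = g • B → A = B := by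
    intro g A B h
    have : Function.Injective (fun x : V => g • x) := MulAction.injective g
    have := Set.image_injective.mpr this
    simpa [← Set.image_smul] using this (by simpa [← Set.image_smul] using h)
  -- rephrase hk and hnorep in terms of trac
  have hk' : ∀ B ∈ 𝓑, ∀ B' ∈ 𝓑, B ≠ B' → (trac Γ B B').ncard = 2 := hk
  have hnorep' : ∀ B ∈ 𝓑, ∀ B₁ ∈ 𝓑, ∀ B₂ ∈ 𝓑, B₁ ≠ B → B₂ ≠ B →
      trac Γ B B₁ = trac Γ B B₂ → B₁ = B₂ := hnorep
  -- a first block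
  have h𝓑ne : 𝓑.Nonempty := by
    apply Set.nonempty_of_ncard_ne_zero; omega
  obtain ⟨B0, hB0⟩ := h𝓑ne
  -- key: every 2-subset of B0 is the trace of some other block
  have hsurj : ∀ x ∈ B0, ∀ y ∈ B0, x ≠ y →
      ∃ C ∈ 𝓑, C ≠ B0 ∧ trac Γ B0 C = {x, y} := by
    intro x hx y hy hxy
    obtain ⟨C0, hC0, hC0ne⟩ : ∃ C0, C0 ∈ 𝓑 ∧ C0 ≠ B0 :=
      Set.exists_ne_of_one_lt_ncard (by omega) B0
    have htr2 : (trac Γ B0 C0).ncard = 2 := hk' B0 hB0 C0 hC0 (Ne.symm hC0ne)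
    obtain ⟨u, w, huw, htr⟩ := Set.ncard_eq_two.mp htr2
    have hu : u ∈ trac Γ B0 C0 := by rw [htr]; exact Set.mem_insert _ _
    have hw : w ∈ trac Γ B0 C0 := by rw [htr]; exact Set.mem_insert_of_mem _ rfl
    obtain ⟨g, hgB0, hgu, hgw⟩ :=
      h2trans B0 hB0 u hu.1 w hw.1 x hx y hy huw hxy
    refine ⟨g • C0, hstab g C0 hC0, ?_, ?_⟩
    · intro h
      exact hC0ne (hinj g _ _ (by rw [h, hgB0]))
    · have : trac Γ (g • B0) (g • C0) = g • trac Γ B0 C0 := trac_smul Γ hadj_smul g B0 C0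
      rw [hgB0] at this
      rw [this, htr]
      rw [Set.smul_set_insert, Set.smul_set_singleton, hgu, hgw]
  -- counting: v = 3
  have hv3 : v = 3 := by
    have hB0fin : B0.Finite := Set.toFinite _
    set Bf : Finset V := hB0fin.toFinset with hBf
    have hBfcard : Bf.card = v := by
      rw [hBf, ← Set.ncard_eq_toFinset_card _ hB0fin]
      exact hsize B0 hB0
    have h𝓑fin : 𝓑.Finite := Set.toFinite _
    set Tf : Finset (Set V) := h𝓑fin.toFinset.erase B0 with hTf
    have hTfcard : Tf.card = v := by
      rw [hTf, Finset.card_erase_of_mem (by simpa using hB0),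
        ← Set.ncard_eq_toFinset_card _ h𝓑fin, hcard]
      omega
    have hex : ∀ S ∈ Bf.powersetCard 2, ∃ C, C ∈ 𝓑 ∧ C ≠ B0 ∧ trac Γ B0 C = ↑S := by
      intro S hS
      rw [Finset.mem_powersetCard] at hS
      obtain ⟨hSsub, hScard⟩ := hS
      obtain ⟨x, y, hxy, rfl⟩ := Finset.card_eq_two.mp hScard
      have hx : x ∈ B0 := by
        have := hSsub (Finset.mem_insert_self x {y}); simpa [hBf] using this
      have hy : y ∈ B0 := by
        have := hSsub (Finset.mem_insert_of_mem (Finset.mem_singleton_self y))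
        simpa [hBf] using this
      obtain ⟨C, hC, hCne, htr⟩ := hsurj x hx y hy hxy
      exact ⟨C, hC, hCne, by rw [htr]; simp⟩
    have hchoose : ∀ S : Finset V, ∃ C : Set V,
        S ∈ Bf.powersetCard 2 → C ∈ 𝓑 ∧ C ≠ B0 ∧ trac Γ B0 C = ↑S := by
      intro S
      by_cases h : S ∈ Bf.powersetCard 2
      · obtain ⟨C, hC⟩ := hex S h; exact ⟨C, fun _ => hC⟩
      · exact ⟨∅, fun h' => absurd h' h⟩
    choose f hf using hchoose
    have hle : (Bf.powersetCard 2).card ≤ Tf.card := by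
      apply Finset.card_le_card_of_injOn f
      · intro S hS
        obtain ⟨h1, h2, _⟩ := hf S hS
        rw [hTf]
        exact Finset.mem_erase.mpr ⟨h2, by simpa using h1⟩
      · intro S1 h1 S2 h2 heq
        obtain ⟨_, _, e1⟩ := hf S1 h1
        obtain ⟨_, _, e2⟩ := hf S2 h2
        apply Finset.coe_injective
        rw [← e1, ← e2, heq]
    rw [Finset.card_powersetCard, hBfcard, hTfcard, Nat.choose_two_right] at hle
    have h2 : v * (v - 1) ≤ 2 * v + 1 :=
      (Nat.div_le_iff_le_mul_add_pred (by norm_num)).mp hle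
    by_contra hne
    have h4 : 4 ≤ v := by omega
    have : 4 * (v - 1) ≤ v * (v - 1) := Nat.mul_le_mul_right _ h4
    omega
  subst hv3
  -- B0 = {a, b, c}
  have hB0card : B0.ncard = 3 := hsize B0 hB0
  obtain ⟨a, b, c, hab, hac, hbc, hB0eq⟩ := Set.ncard_eq_three.mp hB0card
  have ha : a ∈ B0 := by rw [hB0eq]; simp
  have hb : b ∈ B0 := by rw [hB0eq]; simp
  have hc : c ∈ B0 := by rw [hB0eq]; simp
  -- the three other blocks
  obtain ⟨B1, hB1, hB1ne, htr1⟩ := hsurj a ha b hb hab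
  obtain ⟨B2, hB2, hB2ne, htr2⟩ := hsurj a ha c hc hac
  obtain ⟨B3, hB3, hB3ne, htr3⟩ := hsurj b hb c hc hbc
  have hB12 : B1 ≠ B2 := by
    intro h
    rw [h, htr2] at htr1
    have : b ∈ ({a, c} : Set V) := by rw [htr1]; simp
    simp only [Set.mem_insert_iff, Set.mem_singleton_iff] at this
    tauto
  have hB13 : B1 ≠ B3 := by
    intro h
    rw [h, htr3] at htr1
    have : a ∈ ({b, c} : Set V) := by rw [htr1]; simp
    simp only [Set.mem_insert_iff, Set.mem_singleton_iff] at this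
    tauto
  have hB23 : B2 ≠ B3 := by
    intro h
    rw [h, htr3] at htr2
    have : a ∈ ({b, c} : Set V) := by rw [htr2]; simp
    simp only [Set.mem_insert_iff, Set.mem_singleton_iff] at this
    tauto
  -- 𝓑 = {B0, B1, B2, B3}
  have h𝓑eq : 𝓑 = {B0, B1, B2, B3} := by
    have hsub : ({B0, B1, B2, B3} : Set (Set V)) ⊆ 𝓑 := by
      intro X hX
      simp only [Set.mem_insert_iff, Set.mem_singleton_iff] at hX
      rcases hX with rfl | rfl | rfl | rfl <;> assumption
    have hscard : ({B0, B1, B2, B3} : Set (Set V)).ncard = 4 := by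
      rw [Set.ncard_insert_of_notMem (by simp [Ne.symm hB1ne, Ne.symm hB2ne, Ne.symm hB3ne])
        (Set.toFinite _)]
      rw [Set.ncard_insert_of_notMem (by simp [hB12, hB13]) (Set.toFinite _)]
      rw [Set.ncard_insert_of_notMem (by simp [hB23]) (Set.toFinite _)]
      simp
    exact (Set.eq_of_subset_of_ncard_le hsub (by omega) (Set.toFinite _)).symm
  -- t = 2 and a's neighbours in B1 are exactly trac Γ B1 B0
  have hnbhd : ∀ C ∈ 𝓑, C ≠ B0 → ∀ x ∈ B0, x ∈ trac Γ B0 C →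
      Γ.neighborSet x ∩ C = trac Γ C B0 := by
    intro C hC hCne x hx hxtr
    have hne : (Γ.neighborSet x ∩ C).Nonempty := by
      obtain ⟨-, y, hyC, hadj⟩ := hxtr
      exact ⟨y, hadj, hyC⟩
    have hncard : (Γ.neighborSet x ∩ C).ncard = t := by
      rcases ht B0 hB0 C hC (Ne.symm hCne) x hx with h | h
      · exfalso
        rw [Set.ncard_eq_zero (Set.toFinite _)] at h
        exact Set.nonempty_iff_ne_empty.mp hne h
      · exact h
    have hsub : Γ.neighborSet x ∩ C ⊆ trac Γ C B0 := by
      rintro y ⟨hyadj, hyC⟩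
      exact ⟨hyC, x, hx, (Γ.adj_symm hyadj)⟩
    have htrC : (trac Γ C B0).ncard = 2 := hk' C hC B0 hB0 hCne
    have hle : t ≤ 2 := by
      rw [← hncard, ← htrC]
      exact Set.ncard_le_ncard hsub (Set.toFinite _)
    have ht2' : t = 2 := le_antisymm hle ht2
    exact Set.eq_of_subset_of_ncard_le hsub (by omega) (Set.toFinite _)
  have hatr1 : a ∈ trac Γ B0 B1 := by rw [htr1]; simp
  have hnb1 : Γ.neighborSet a ∩ B1 = trac Γ B1 B0 := hnbhd B1 hB1 hB1ne a ha hatr1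
  -- p, q the two vertices of B1 adjacent to B0
  have htrB1B0 : (trac Γ B1 B0).ncard = 2 := hk' B1 hB1 B0 hB0 hB1ne
  obtain ⟨p, q, hpq, htrpq⟩ := Set.ncard_eq_two.mp htrB1B0
  have hp : p ∈ trac Γ B1 B0 := by rw [htrpq]; simp
  have hq : q ∈ trac Γ B1 B0 := by rw [htrpq]; simp
  have hpB1 : p ∈ B1 := hp.1
  have hqB1 : q ∈ B1 := hq.1
  have hadjap : Γ.Adj a p := by
    have : p ∈ Γ.neighborSet a ∩ B1 := by rw [hnb1]; exact hp
    exact this.1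
  have hadjaq : Γ.Adj a q := by
    have : q ∈ Γ.neighborSet a ∩ B1 := by rw [hnb1]; exact hq
    exact this.1
  -- traces in B1 of B2 and B3
  have hτ0 : trac Γ B1 B0 = {p, q} := htrpq
  have hB01 : B0 ≠ B1 := Ne.symm hB1ne
  have hB21 : B2 ≠ B1 := Ne.symm hB12
  have hB31 : B3 ≠ B1 := Ne.symm hB13
  have hτ2card : (trac Γ B1 B2).ncard = 2 := hk' B1 hB1 B2 hB2 hB21.symm
  have hτ3card : (trac Γ B1 B3).ncard = 2 := hk' B1 hB1 B3 hB3 hB31.symm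
  have hτ02 : trac Γ B1 B0 ≠ trac Γ B1 B2 := fun h =>
    hB2ne (hnorep' B1 hB1 B0 hB0 B2 hB2 hB01 hB21 h).symm
  have hτ03 : trac Γ B1 B0 ≠ trac Γ B1 B3 := fun h =>
    hB3ne (hnorep' B1 hB1 B0 hB0 B3 hB3 hB01 hB31 h).symm
  have hτ23 : trac Γ B1 B2 ≠ trac Γ B1 B3 := fun h =>
    hB23 (hnorep' B1 hB1 B2 hB2 B3 hB3 hB21 hB31 h)
  -- if both p and q are in a 2-element trace in B1, it equals {p,q} = trac Γ B1 B0
  have hpair : ∀ C ∈ 𝓑, C ≠ B1 → p ∈ trac Γ B1 C → q ∈ trac Γ B1 C →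
      trac Γ B1 C = trac Γ B1 B0 := by
    intro C hC hCne hpC hqC
    have hsub : ({p, q} : Set V) ⊆ trac Γ B1 C := by
      intro z hz
      simp only [Set.mem_insert_iff, Set.mem_singleton_iff] at hz
      rcases hz with rfl | rfl <;> assumption
    have := Set.eq_of_subset_of_ncard_le hsub
      (by rw [hk' B1 hB1 C hC (Ne.symm hCne), Set.ncard_pair hpq]) (Set.toFinite _)
    rw [← this, hτ0]
  -- find W ∈ {B2, B3} with p in its trace in B1 but not q
  obtain ⟨W, hW, hWne0, hWne1, hpW, hqW⟩ : ∃ W, W ∈ 𝓑 ∧ W ≠ B0 ∧ W ≠ B1 ∧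
      p ∈ trac Γ B1 W ∧ q ∉ trac Γ B1 W := by
    by_cases hp2 : p ∈ trac Γ B1 B2
    · refine ⟨B2, hB2, hB2ne, hB21, hp2, fun hq2 => ?_⟩
      exact hτ02 (hpair B2 hB2 hB21 hp2 hq2).symm
    · have hp3 : p ∈ trac Γ B1 B3 := by
        by_contra hp3
        -- both τ2 and τ3 ⊆ B1 \ {p}, which has 2 elements
        have hB1card : B1.ncard = 3 := hsize B1 hB1
        have hdiff : (B1 \ {p}).ncard = 2 := by
          rw [Set.ncard_diff_singleton_of_mem hpB1, hB1card]
        have hs2 : trac Γ B1 B2 ⊆ B1 \ {p} := by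
          intro z hz
          exact ⟨hz.1, fun h => hp2 (by rwa [Set.mem_singleton_iff.mp h] at hz)⟩
        have hs3 : trac Γ B1 B3 ⊆ B1 \ {p} := by
          intro z hz
          exact ⟨hz.1, fun h => hp3 (by rwa [Set.mem_singleton_iff.mp h] at hz)⟩
        have e2 := Set.eq_of_subset_of_ncard_le hs2 (by omega) (Set.toFinite _)
        have e3 := Set.eq_of_subset_of_ncard_le hs3 (by omega) (Set.toFinite _)
        exact hτ23 (e2.trans e3.symm)
      exact ⟨B3, hB3, hB3ne, hB31, hp3,
        fun hq3 => hτ03 (hpair B3 hB3 hB31 hp3 hq3).symm⟩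
  -- arc-transitivity: g with g • a = a and g • p = q
  obtain ⟨g, hga, hgp⟩ := harc a p a q hadjap hadjaq
  -- unique block containing a given vertex
  have huniq : ∀ x : V, ∀ C ∈ 𝓑, ∀ D ∈ 𝓑, x ∈ C → x ∈ D → C = D := by
    intro x C hC D hD hxC hxD
    obtain ⟨E, ⟨-, -⟩, hEuniq⟩ := hsetoid.2 x
    rw [hEuniq C ⟨hC, hxC⟩, hEuniq D ⟨hD, hxD⟩]
  -- g fixes all blocks
  have hgB0 : g • B0 = B0 := by
    apply huniq a (g • B0) (hstab g B0 hB0) B0 hB0 _ ha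
    rw [← hga]; exact Set.smul_mem_smul_set ha
  have hgB1 : g • B1 = B1 := by
    apply huniq q (g • B1) (hstab g B1 hB1) B1 hB1 _ hqB1
    rw [← hgp]; exact Set.smul_mem_smul_set hpB1
  have hgB2 : g • B2 = B2 := by
    have hmem : g • B2 ∈ 𝓑 := hstab g B2 hB2
    rw [h𝓑eq] at hmem
    simp only [Set.mem_insert_iff, Set.mem_singleton_iff] at hmem
    rcases hmem with h | h | h | h
    · exact absurd (hinj g _ _ (h.trans hgB0.symm)) hB2ne
    · exact absurd (hinj g _ _ (h.trans hgB1.symm)) hB21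
    · exact h
    · -- impossible: a has a neighbour in B2 but none in B3
      exfalso
      have hatr2 : a ∈ trac Γ B0 B2 := by rw [htr2]; simp
      obtain ⟨-, y, hyB2, hadj⟩ := hatr2
      have hadj' : Γ.Adj a (g • y) := by
        have := hadj_smul g a y hadj
        rwa [hga] at this
      have hgyB3 : g • y ∈ B3 := by rw [← h]; exact Set.smul_mem_smul_set hyB2
      have : a ∈ trac Γ B0 B3 := ⟨ha, g • y, hgyB3, hadj'⟩
      rw [htr3] at this
      simp only [Set.mem_insert_iff, Set.mem_singleton_iff] at this
      tauto
  have hgB3 : g • B3 = B3 := by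
    have hmem : g • B3 ∈ 𝓑 := hstab g B3 hB3
    rw [h𝓑eq] at hmem
    simp only [Set.mem_insert_iff, Set.mem_singleton_iff] at hmem
    rcases hmem with h | h | h | h
    · exact absurd (hinj g _ _ (h.trans hgB0.symm)) hB3ne
    · exact absurd (hinj g _ _ (h.trans hgB1.symm)) hB31
    · exact absurd (hinj g _ _ (h.trans hgB2.symm)) hB23.symm
    · exact h
  have hgW : g • W = W := by
    have hmem : W ∈ 𝓑 := hW
    rw [h𝓑eq] at hmem
    simp only [Set.mem_insert_iff, Set.mem_singleton_iff] at hmem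
    rcases hmem with rfl | rfl | rfl | rfl
    · exact absurd rfl hWne0
    · exact absurd rfl hWne1
    · exact hgB2
    · exact hgB3
  -- contradiction: q would be adjacent to W
  apply hqW
  obtain ⟨-, z, hzW, hadjpz⟩ := hpW
  refine ⟨hqB1, g • z, ?_, ?_⟩
  · rw [← hgW]; exact Set.smul_mem_smul_set hzW
  · have := hadj_smul g p z hadjpz
    rwa [hgp] at this
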